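/- arXiv:1406.1168 — 2 statements merged into one kernel-verified Lean document; each statement's English description precedes it below -/
import Mathlib

section
/- Let K be a subfield of ℂ and let f : ℕ → ℂ be a function with f(n) → α as n → ∞, where α is transcendental over K. Then f is not an algebraic function over K: there do not exist polynomials q₀, …, q_k ∈ K[X] with q_k ≠ 0 such that q_k(n)·f(n)^k + q_{k-1}(n)·f(n)^{k-1} + ⋯ + q₁(n)·f(n) + q₀(n) = 0 for all n. -/
open Filter Polynomial Finset

lemma aux_poly_tendsto (K : Subfield ℂ) (p : Polynomial K) (d : ℕ) (hd : p.natDegree ≤ d) :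
    Tendsto (fun n : ℕ => Polynomial.aeval (n : ℂ) p / (n : ℂ) ^ d) atTop
      (nhds (algebraMap K ℂ (p.coeff d))) := by
  have h0 : Tendsto (fun n : ℕ => ((n : ℂ))⁻¹) atTop (nhds 0) := by
    have h1 : Tendsto (fun n : ℕ => ((n : ℝ))⁻¹) atTop (nhds 0) :=
      tendsto_inv_atTop_zero.comp tendsto_natCast_atTop_atTop
    have h2 := (Complex.continuous_ofReal.tendsto 0).comp h1
    have h3 : (fun n : ℕ => ((n : ℂ))⁻¹) = Complex.ofReal ∘ fun n : ℕ => ((n : ℝ))⁻¹ := by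
      funext n
      simp [Function.comp, Complex.ofReal_inv]
    rw [h3]
    simpa using h2
  have key : ∀ j, j ≤ d → Tendsto (fun n : ℕ => ((n : ℂ)) ^ j / (n : ℂ) ^ d) atTop
      (nhds (if j = d then 1 else 0)) := by
    intro j hj
    have h2 : Tendsto (fun n : ℕ => (((n : ℂ))⁻¹) ^ (d - j)) atTop (nhds ((0 : ℂ) ^ (d - j))) :=
      h0.pow _
    have h3 : (0 : ℂ) ^ (d - j) = if j = d then 1 else 0 := by
      rcases eq_or_lt_of_le hj with h | h
      · simp [h]
      · rw [zero_pow (by omega), if_neg (by omega)]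
    rw [h3] at h2
    refine h2.congr' ?_
    filter_upwards [eventually_ge_atTop 1] with n hn
    have hn0 : (n : ℂ) ≠ 0 := Nat.cast_ne_zero.mpr (by omega)
    rw [inv_pow, inv_eq_one_div, div_eq_div_iff (pow_ne_zero _ hn0) (pow_ne_zero _ hn0)]
    rw [one_mul, ← pow_add]
    congr 1
    omega
  have hs : ∀ n : ℕ, Polynomial.aeval (n : ℂ) p
      = ∑ j ∈ Finset.range (d + 1), algebraMap K ℂ (p.coeff j) * (n : ℂ) ^ j := by
    intro n
    rw [Polynomial.aeval_eq_sum_range' (Nat.lt_succ_of_le hd)]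
    simp [Algebra.smul_def]
  have hsum := tendsto_finset_sum (Finset.range (d + 1))
    (fun j hj => (tendsto_const_nhds.mul (key j (Nat.lt_succ_iff.mp (Finset.mem_range.mp hj)))
      : Tendsto (fun n : ℕ => algebraMap K ℂ (p.coeff j) * ((n : ℂ) ^ j / (n : ℂ) ^ d)) atTop _))
  have hval : (∑ j ∈ Finset.range (d + 1),
      algebraMap K ℂ (p.coeff j) * (if j = d then (1 : ℂ) else 0)) = algebraMap K ℂ (p.coeff d) := by
    simp [mul_ite, Finset.sum_ite_eq', Finset.mem_range]
  rw [hval] at hsum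
  refine hsum.congr (fun n => ?_)
  rw [hs n, Finset.sum_div]
  exact Finset.sum_congr rfl fun j _ => (mul_div_assoc _ _ _).symm

theorem not_algebraic_function_of_tendsto_transcendental
    (K : Subfield ℂ) (f : ℕ → ℂ) (α : ℂ)
    (hlim : Tendsto f atTop (nhds α))
    (htr : Transcendental K α) :
    ¬ ∃ (k : ℕ) (q : ℕ → Polynomial K), q k ≠ 0 ∧
      ∀ n : ℕ, ∑ i ∈ Finset.range (k + 1),
        Polynomial.aeval (n : ℂ) (q i) * f n ^ i = 0 := by
  rintro ⟨k, q, hqk, hq⟩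
  set d := (Finset.range (k + 1)).sup (fun i => (q i).natDegree) with hdset
  have hdle : ∀ i ∈ Finset.range (k + 1), (q i).natDegree ≤ d := fun i hi => by rw [hdset]; exact Finset.le_sup (f := fun i => (q i).natDegree) hi
  have hkmem : k ∈ Finset.range (k + 1) := Finset.self_mem_range_succ k
  obtain ⟨i₀, hi₀mem, hi₀⟩ : ∃ i ∈ Finset.range (k + 1), (q i).coeff d ≠ 0 := by
    obtain ⟨i, hi, hieq⟩ := Finset.exists_mem_eq_sup (Finset.range (k + 1)) ⟨k, hkmem⟩
      (fun i => (q i).natDegree)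
    by_cases h : q i = 0
    · have hd0 : d = 0 := by rw [hdset, hieq, h, Polynomial.natDegree_zero]
      refine ⟨k, hkmem, ?_⟩
      rw [hd0]
      intro hc
      apply hqk
      have hdeg : (q k).natDegree = 0 := le_antisymm (hd0 ▸ hdle k hkmem) (Nat.zero_le _)
      rw [Polynomial.eq_C_of_natDegree_eq_zero hdeg, hc, map_zero]
    · refine ⟨i, hi, ?_⟩
      rw [hdset, hieq]
      exact Polynomial.leadingCoeff_ne_zero.mpr h
  set P : Polynomial K := ∑ i ∈ Finset.range (k + 1),
    Polynomial.C ((q i).coeff d) * Polynomial.X ^ i with hPset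
  have hP0 : P ≠ 0 := by
    intro h
    apply hi₀
    have := congrArg (fun r : Polynomial K => r.coeff i₀) h
    simpa [hPset, Polynomial.finset_sum_coeff, Polynomial.coeff_C_mul, Polynomial.coeff_X_pow,
      Finset.sum_ite_eq', hi₀mem] using this
  have hsum : Tendsto (fun n : ℕ => ∑ i ∈ Finset.range (k + 1),
      Polynomial.aeval (n : ℂ) (q i) / (n : ℂ) ^ d * f n ^ i) atTop
      (nhds (∑ i ∈ Finset.range (k + 1), algebraMap K ℂ ((q i).coeff d) * α ^ i)) :=
    tendsto_finset_sum _ fun i hi => (aux_poly_tendsto K (q i) d (hdle i hi)).mul (hlim.pow i)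
  have heq : (fun n : ℕ => ∑ i ∈ Finset.range (k + 1),
      Polynomial.aeval (n : ℂ) (q i) / (n : ℂ) ^ d * f n ^ i) =ᶠ[atTop] fun _ => (0 : ℂ) := by
    filter_upwards [eventually_ge_atTop 1] with n hn
    have : ∀ i ∈ Finset.range (k + 1),
        Polynomial.aeval (n : ℂ) (q i) / (n : ℂ) ^ d * f n ^ i
          = Polynomial.aeval (n : ℂ) (q i) * f n ^ i / (n : ℂ) ^ d := fun i _ => by ring
    rw [Finset.sum_congr rfl this, ← Finset.sum_div, hq n, zero_div]
  have hzero : (∑ i ∈ Finset.range (k + 1), algebraMap K ℂ ((q i).coeff d) * α ^ i) = 0 :=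
    tendsto_nhds_unique (hsum.congr' heq) tendsto_const_nhds
  apply htr
  refine ⟨P, hP0, ?_⟩
  rw [hPset, map_sum]
  simpa using hzero
end

section
/- Let f : ℕ → ℂ satisfy f(n) → α as n → ∞ where α is a transcendental number (transcendental over ℚ). Then f is not an algebraic function over the field of algebraic numbers: there is no nonzero tuple of polynomials q₀, …, q_k with algebraic coefficients such that q_k(n) f(n)^k + ⋯ + q₀(n) = 0 for all n. -/
open Filter Polynomial Finset

private lemma tendsto_inv_natCast_complex :
    Tendsto (fun n : ℕ => ((n : ℂ))⁻¹) atTop (nhds 0) := by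
  have h : Tendsto (fun n : ℕ => ((n : ℝ))⁻¹) atTop (nhds 0) :=
    tendsto_inv_atTop_zero.comp tendsto_natCast_atTop_atTop
  have h2 := (Complex.continuous_ofReal.tendsto (0 : ℝ)).comp h
  simp only [Function.comp_def, Complex.ofReal_inv, Complex.ofReal_natCast,
    Complex.ofReal_zero] at h2
  exact h2

private lemma tendsto_eval_div_pow (p : Polynomial ℂ) (d : ℕ) (hd : p.natDegree ≤ d) :
    Tendsto (fun n : ℕ => p.eval (n : ℂ) / (n : ℂ) ^ d) atTop (nhds (p.coeff d)) := by
  have key : ∀ᶠ n : ℕ in atTop, p.eval (n : ℂ) / (n : ℂ) ^ d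
      = ∑ j ∈ Finset.range (d + 1), p.coeff j * ((n : ℂ))⁻¹ ^ (d - j) := by
    filter_upwards [eventually_ge_atTop 1] with n hn
    have hn0 : (n : ℂ) ≠ 0 := Nat.cast_ne_zero.mpr (by omega)
    rw [Polynomial.eval_eq_sum_range' (by omega : p.natDegree < d + 1),
      Finset.sum_div]
    refine Finset.sum_congr rfl fun j hj => ?_
    have hjd : j ≤ d := by simpa using Nat.lt_succ_iff.mp (Finset.mem_range.mp hj)
    rw [mul_div_assoc]
    congr 1
    rw [inv_pow, pow_sub₀ _ hn0 hjd, div_eq_mul_inv, mul_comm, ← div_eq_mul_inv,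
      inv_div, div_eq_mul_inv, mul_comm]
  have hlim : Tendsto (fun n : ℕ => ∑ j ∈ Finset.range (d + 1),
      p.coeff j * ((n : ℂ))⁻¹ ^ (d - j)) atTop
      (nhds (∑ j ∈ Finset.range (d + 1), p.coeff j * (0 : ℂ) ^ (d - j))) := by
    refine tendsto_finset_sum _ fun j _ => ?_
    exact (tendsto_const_nhds.mul (tendsto_inv_natCast_complex.pow _))
  have hval : (∑ j ∈ Finset.range (d + 1), p.coeff j * (0 : ℂ) ^ (d - j)) = p.coeff d := by
    rw [Finset.sum_eq_single d]
    · simp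
    · intro j hj hjd
      have : 0 < d - j := by
        have := Nat.lt_succ_iff.mp (Finset.mem_range.mp hj)
        omega
      simp [zero_pow (by omega : d - j ≠ 0)]
    · intro h; exact absurd (Finset.self_mem_range_succ d) h
  rw [← hval]
  exact hlim.congr' (key.mono fun n h => h.symm)

theorem not_algebraic_function_over_algebraic_numbers_of_tendsto_transcendental
    (f : ℕ → ℂ) (α : ℂ)
    (hlim : Tendsto f atTop (nhds α))
    (htr : Transcendental ℚ α) :
    ¬ ∃ (k : ℕ) (q : ℕ → Polynomial ℂ),
      (∀ i m, IsAlgebraic ℚ ((q i).coeff m)) ∧ q k ≠ 0 ∧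
      ∀ n : ℕ, ∑ i ∈ Finset.range (k + 1),
        (q i).eval (n : ℂ) * f n ^ i = 0 := by
  rintro ⟨k, q, halg, hqk, hrel⟩
  set D : ℕ := (Finset.range (k + 1)).sup (fun i => (q i).natDegree) with hD
  have hle : ∀ i ∈ Finset.range (k + 1), (q i).natDegree ≤ D :=
    fun i hi => Finset.le_sup (f := fun i => (q i).natDegree) hi
  set c : ℕ → ℂ := fun i => (q i).coeff D with hc
  -- limit relation
  have hsum : ∑ i ∈ Finset.range (k + 1), c i * α ^ i = 0 := by
    have h1 : Tendsto (fun n : ℕ => ∑ i ∈ Finset.range (k + 1),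
        (q i).eval (n : ℂ) / (n : ℂ) ^ D * f n ^ i) atTop
        (nhds (∑ i ∈ Finset.range (k + 1), c i * α ^ i)) := by
      refine tendsto_finset_sum _ fun i hi => ?_
      exact (tendsto_eval_div_pow (q i) D (hle i hi)).mul (hlim.pow i)
    have h2 : ∀ᶠ n : ℕ in atTop, (∑ i ∈ Finset.range (k + 1),
        (q i).eval (n : ℂ) / (n : ℂ) ^ D * f n ^ i) = 0 := by
      filter_upwards [eventually_ge_atTop 1] with n hn
      have hn0 : ((n : ℂ)) ^ D ≠ 0 := pow_ne_zero _ (Nat.cast_ne_zero.mpr (by omega))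
      have : (∑ i ∈ Finset.range (k + 1),
          (q i).eval (n : ℂ) / (n : ℂ) ^ D * f n ^ i)
          = (∑ i ∈ Finset.range (k + 1), (q i).eval (n : ℂ) * f n ^ i) / (n : ℂ) ^ D := by
        rw [Finset.sum_div]
        exact Finset.sum_congr rfl fun i _ => by ring
      rw [this, hrel n, zero_div]
    have := tendsto_nhds_unique h1 (Tendsto.congr' (h2.mono fun n h => h.symm) tendsto_const_nhds)
    exact this
  -- some c i is nonzero
  have hex : ∃ i ∈ Finset.range (k + 1), c i ≠ 0 := by
    obtain ⟨i₁, hi₁, hDi₁⟩ := Finset.exists_mem_eq_sup (Finset.range (k + 1))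
      ⟨k, Finset.self_mem_range_succ k⟩ (fun i => (q i).natDegree)
    by_cases hq1 : q i₁ = 0
    · have hD0 : D = 0 := by rw [hD, hDi₁, hq1, Polynomial.natDegree_zero]
      refine ⟨k, Finset.self_mem_range_succ k, ?_⟩
      have hnd : (q k).natDegree = 0 :=
        Nat.le_zero.mp (hD0 ▸ hle k (Finset.self_mem_range_succ k))
      have h := Polynomial.leadingCoeff_ne_zero.mpr hqk
      rw [Polynomial.leadingCoeff, hnd] at h
      simpa [hc, hD0] using h
    · refine ⟨i₁, hi₁, ?_⟩
      have := Polynomial.leadingCoeff_ne_zero.mpr hq1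
      rwa [Polynomial.leadingCoeff, ← hDi₁] at this
  obtain ⟨i₀, hi₀, hci₀⟩ := hex
  -- α is algebraic over the algebraic closure of ℚ in ℂ
  set K := algebraicClosure ℚ ℂ with hK
  have hcK : ∀ i, c i ∈ K := fun i => mem_algebraicClosure_iff.mpr (halg i D)
  set P : Polynomial K := ∑ i ∈ Finset.range (k + 1),
    Polynomial.C (⟨c i, hcK i⟩ : K) * Polynomial.X ^ i with hP
  have hPcoeff : ∀ j ∈ Finset.range (k + 1), P.coeff j = (⟨c j, hcK j⟩ : K) := by
    intro j hj
    rw [hP, Polynomial.finset_sum_coeff]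
    rw [Finset.sum_eq_single j]
    · simp
    · intro b _ hbj
      simp only [Polynomial.coeff_C_mul, Polynomial.coeff_X_pow]
      rw [if_neg (fun h => hbj h.symm), mul_zero]
    · intro h; exact absurd hj h
  have hP0 : P ≠ 0 := by
    intro h
    have := hPcoeff i₀ hi₀
    rw [h, Polynomial.coeff_zero] at this
    exact hci₀ (by simpa using congrArg Subtype.val this.symm)
  have hPα : Polynomial.aeval α P = 0 := by
    rw [hP]
    simp only [map_sum, map_mul, map_pow, Polynomial.aeval_C, Polynomial.aeval_X]
    have : ∀ i, (algebraMap K ℂ) (⟨c i, hcK i⟩ : K) = c i := fun i => rfl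
    simp only [this]
    exact hsum
  have halgK : IsAlgebraic K α := ⟨P, hP0, hPα⟩
  have hint : IsIntegral K α := halgK.isIntegral
  haveI : Algebra.IsAlgebraic ℚ K := algebraicClosure.isAlgebraic ℚ ℂ
  haveI : Algebra.IsIntegral ℚ K := Algebra.IsAlgebraic.isIntegral
  have : IsIntegral ℚ α := isIntegral_trans α hint
  exact htr this.isAlgebraic
end
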